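/- Let B : H₊ → H₋ be a bounded linear operator which is a pure contraction (‖Bx‖ < ‖x‖ for all nonzero x) with ‖B‖ = 1. Let W := {(x, Bx) : x ∈ H₊} and W' := {(B*y, y) : y ∈ H₋} (which is the symplectic orthogonal of W with respect to the standard symplectic form). Then W ∩ W' = {0}, the algebraic sum W + W' is dense in H₊ × H₋, and W + W' ≠ H₊ × H₋. -/

import Mathlib

open scoped InnerProductSpace

set_option maxHeartbeats 1000000 in
/-- If `B : H₊ →L[ℂ] H₋` is a pure contraction (`‖Bx‖ < ‖x‖` for
all `x ≠ 0`) with `‖B‖ = 1`, then for `W = {(x, Bx)}` and `W' = {(B*y, y)}`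
(the symplectic orthogonal of `W`) one has `W ∩ W' = {0}`, the algebraic sum
`W + W'` is dense in `H₊ × H₋`, and `W + W' ≠ H₊ × H₋`. -/
theorem graph_sum_adjointGraph_dense_proper
    {Hp Hm : Type*}
    [NormedAddCommGroup Hp] [InnerProductSpace ℂ Hp] [CompleteSpace Hp]
    [NormedAddCommGroup Hm] [InnerProductSpace ℂ Hm] [CompleteSpace Hm]
    (B : Hp →L[ℂ] Hm)
    (hpure : ∀ x : Hp, x ≠ 0 → ‖B x‖ < ‖x‖) (hnorm : ‖B‖ = 1)
    (W W' S : Set (Hp × Hm))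
    (hW : W = {p : Hp × Hm | ∃ x : Hp, p = (x, B x)})
    (hW' : W' = {p : Hp × Hm | ∃ y : Hm, p = (ContinuousLinearMap.adjoint B y, y)})
    (hS : S = {p : Hp × Hm | ∃ w ∈ W, ∃ w' ∈ W', p = w + w'}) :
    W ∩ W' = {0} ∧ Dense S ∧ S ≠ Set.univ := by
  classical
  have hcontr : ∀ z : Hp, ‖B z‖ ≤ ‖z‖ := fun z => by
    simpa [hnorm] using B.le_opNorm z
  -- If `B† (B x) = x` then `x = 0`.
  have hfix : ∀ x : Hp, ContinuousLinearMap.adjoint B (B x) = x → x = 0 := by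
    intro x hx
    by_contra h0
    have h1 : (⟪B x, B x⟫_ℂ) = ⟪x, x⟫_ℂ := by
      rw [← ContinuousLinearMap.adjoint_inner_left, hx]
    have h3 : (‖B x‖ : ℝ)^2 = (‖x‖ : ℝ)^2 := by
      rw [← inner_self_eq_norm_sq (𝕜 := ℂ), ← inner_self_eq_norm_sq (𝕜 := ℂ), h1]
    have := hpure x h0
    nlinarith [norm_nonneg (B x), norm_nonneg x]
  -- Key inequality: `‖x - B†(Bx)‖² ≤ ‖x‖² - ‖Bx‖²`.
  have hkey : ∀ x : Hp,
      ‖x - ContinuousLinearMap.adjoint B (B x)‖^2 ≤ ‖x‖^2 - ‖B x‖^2 := by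
    intro x
    set y := x - ContinuousLinearMap.adjoint B (B x) with hy
    have hxy : ContinuousLinearMap.adjoint B (B x) = x - y := by rw [hy]; abel
    have hr : RCLike.re ⟪x, y⟫_ℂ = ‖x‖^2 - ‖B x‖^2 := by
      rw [hy, inner_sub_right, ContinuousLinearMap.adjoint_inner_right, map_sub,
        inner_self_eq_norm_sq, inner_self_eq_norm_sq]
    have hBr : RCLike.re ⟪B x, B y⟫_ℂ = RCLike.re ⟪x, y⟫_ℂ - ‖y‖^2 := by
      rw [← ContinuousLinearMap.adjoint_inner_left, hxy, inner_sub_left, map_sub,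
        inner_self_eq_norm_sq]
    have hc : ‖B (x - y)‖ ≤ ‖x - y‖ := hcontr (x - y)
    have e1 : ‖x - y‖^2 = ‖x‖^2 - 2 * RCLike.re ⟪x, y⟫_ℂ + ‖y‖^2 :=
      norm_sub_sq (𝕜 := ℂ) x y
    have e2 : ‖B (x - y)‖^2 = ‖B x‖^2 - 2 * RCLike.re ⟪B x, B y⟫_ℂ + ‖B y‖^2 := by
      rw [map_sub]; exact norm_sub_sq (𝕜 := ℂ) (B x) (B y)
    nlinarith [sq_nonneg (‖B y‖), norm_nonneg (x - y), norm_nonneg (B (x - y))]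
  -- The map `T (x, y) = (x + B† y, B x + y)` whose range is `S`.
  set T : (Hp × Hm) →L[ℂ] (Hp × Hm) :=
    ((ContinuousLinearMap.fst ℂ Hp Hm) +
      (ContinuousLinearMap.adjoint B).comp (ContinuousLinearMap.snd ℂ Hp Hm)).prod
      (B.comp (ContinuousLinearMap.fst ℂ Hp Hm) + (ContinuousLinearMap.snd ℂ Hp Hm))
    with hTdef
  have hT : ∀ p : Hp × Hm,
      T p = (p.1 + ContinuousLinearMap.adjoint B p.2, B p.1 + p.2) := fun p => rfl
  have hSrange : S = Set.range T := by
    rw [hS, hW, hW']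
    ext p
    simp only [Set.mem_setOf_eq, Set.mem_range]
    constructor
    · rintro ⟨w, ⟨x, rfl⟩, w', ⟨y, rfl⟩, rfl⟩
      exact ⟨(x, y), by simp [hT, Prod.ext_iff]⟩
    · rintro ⟨⟨x, y⟩, rfl⟩
      exact ⟨(x, B x), ⟨x, rfl⟩, (ContinuousLinearMap.adjoint B y, y), ⟨y, rfl⟩,
        by simp [hT, Prod.ext_iff]⟩
  -- Part 1
  have hpart1 : W ∩ W' = {0} := by
    ext p
    simp only [Set.mem_inter_iff, hW, hW', Set.mem_setOf_eq, Set.mem_singleton_iff]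
    constructor
    · rintro ⟨⟨x, rfl⟩, ⟨y, hxy⟩⟩
      have hx1 : x = ContinuousLinearMap.adjoint B y := congrArg Prod.fst hxy
      have hx2 : B x = y := congrArg Prod.snd hxy
      have hx0 : x = 0 := hfix x (by rw [hx2, ← hx1])
      simp [hx0, Prod.ext_iff]
    · rintro rfl
      exact ⟨⟨0, by simp [Prod.ext_iff]⟩, ⟨0, by simp [Prod.ext_iff]⟩⟩
  -- Part 2
  set φ : WithLp 2 (Hp × Hm) ≃L[ℂ] Hp × Hm :=
    WithLp.prodContinuousLinearEquiv 2 ℂ Hp Hm with hφ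
  set T' : WithLp 2 (Hp × Hm) →L[ℂ] WithLp 2 (Hp × Hm) :=
    (φ.symm : (Hp × Hm) →L[ℂ] WithLp 2 (Hp × Hm)).comp
      (T.comp (φ : WithLp 2 (Hp × Hm) →L[ℂ] Hp × Hm)) with hT'def
  have hT' : ∀ q, T' q = φ.symm (T (φ q)) := fun q => rfl
  have horth : (LinearMap.range (T' : WithLp 2 (Hp × Hm) →ₗ[ℂ] WithLp 2 (Hp × Hm)))ᗮ = ⊥ := by
    rw [Submodule.eq_bot_iff]
    intro q hq
    rw [Submodule.mem_orthogonal] at hq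
    have key : ∀ ab : Hp × Hm,
        ⟪(T ab).1, (φ q).1⟫_ℂ + ⟪(T ab).2, (φ q).2⟫_ℂ = 0 := by
      intro ab
      have h0 := hq (T' (φ.symm ab)) (LinearMap.mem_range_self _ _)
      rw [hT'] at h0
      rw [WithLp.prod_inner_apply] at h0
      simpa [hφ] using h0
    set u := (φ q).1 with hu
    set v := (φ q).2 with hv
    have key2 : ∀ a : Hp, ⟪a, u + ContinuousLinearMap.adjoint B v⟫_ℂ = 0 := by
      intro a
      have h0 := key (a, 0)
      rw [hT] at h0
      simp only [map_zero, add_zero, zero_add] at h0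
      rw [inner_add_right, ContinuousLinearMap.adjoint_inner_right]
      exact h0
    have key3 : ∀ b : Hm, ⟪b, B u + v⟫_ℂ = 0 := by
      intro b
      have h0 := key (0, b)
      rw [hT] at h0
      simp only [map_zero, add_zero, zero_add] at h0
      rw [inner_add_right, ← ContinuousLinearMap.adjoint_inner_left]
      exact h0
    have hu0 : u + ContinuousLinearMap.adjoint B v = 0 := by
      have := key2 (u + ContinuousLinearMap.adjoint B v)
      rwa [inner_self_eq_zero] at this
    have hv0 : B u + v = 0 := by
      have := key3 (B u + v)
      rwa [inner_self_eq_zero] at this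
    have hvv : v = -B u := eq_neg_of_add_eq_zero_right hv0
    have hufix : ContinuousLinearMap.adjoint B (B u) = u := by
      rw [hvv] at hu0
      simp only [map_neg] at hu0
      linear_combination (norm := abel) -hu0
    have hu00 : u = 0 := hfix u hufix
    have hv00 : v = 0 := by rw [hvv, hu00, map_zero, neg_zero]
    have hq0 : φ q = 0 := by
      have h1 : φ q = (u, v) := rfl
      rw [h1, hu00, hv00]; rfl
    have := congrArg φ.symm hq0
    simpa using this
  have hdense' : Dense ((LinearMap.range (T' : WithLp 2 (Hp × Hm) →ₗ[ℂ] WithLp 2 (Hp × Hm)) : Submodule ℂ (WithLp 2 (Hp × Hm))) :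
      Set (WithLp 2 (Hp × Hm))) := by
    rw [Submodule.dense_iff_topologicalClosure_eq_top,
      Submodule.topologicalClosure_eq_top_iff]
    exact horth
  have himg : φ '' ((LinearMap.range (T' : WithLp 2 (Hp × Hm) →ₗ[ℂ] WithLp 2 (Hp × Hm)) : Submodule ℂ (WithLp 2 (Hp × Hm))) :
      Set (WithLp 2 (Hp × Hm))) = S := by
    rw [hSrange]
    ext p
    constructor
    · rintro ⟨q, ⟨z, rfl⟩, rfl⟩
      exact ⟨φ z, by rw [ContinuousLinearMap.coe_coe, hT']; simp⟩
    · rintro ⟨z, rfl⟩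
      exact ⟨T' (φ.symm z), ⟨φ.symm z, rfl⟩, by rw [hT']; simp⟩
  have hpart2 : Dense S := by
    rw [dense_iff_closure_eq] at hdense' ⊢
    rw [← himg]
    calc closure (⇑φ '' ((LinearMap.range (T' : WithLp 2 (Hp × Hm) →ₗ[ℂ] WithLp 2 (Hp × Hm)) : Submodule ℂ (WithLp 2 (Hp × Hm))) :
          Set (WithLp 2 (Hp × Hm))))
        = closure (⇑φ.toHomeomorph '' _) := rfl
      _ = ⇑φ.toHomeomorph '' closure _ := (φ.toHomeomorph.image_closure _).symm
      _ = ⇑φ.toHomeomorph '' Set.univ := by rw [hdense']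
      _ = Set.univ := Set.image_univ_of_surjective φ.toHomeomorph.surjective
  -- Part 3
  have hpart3 : S ≠ Set.univ := by
    intro hU
    have hrange : LinearMap.range (T : (Hp × Hm) →ₗ[ℂ] (Hp × Hm)) = ⊤ := by
      rw [LinearMap.range_eq_top]
      intro p
      have hp : p ∈ S := hU ▸ Set.mem_univ p
      rwa [hSrange] at hp
    have hker : LinearMap.ker (T : (Hp × Hm) →ₗ[ℂ] (Hp × Hm)) = ⊥ := by
      rw [LinearMap.ker_eq_bot']
      intro p hp
      rw [ContinuousLinearMap.coe_coe, hT] at hp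
      have h1 : p.1 + ContinuousLinearMap.adjoint B p.2 = 0 := congrArg Prod.fst hp
      have h2 : B p.1 + p.2 = 0 := congrArg Prod.snd hp
      have hp2 : p.2 = -B p.1 := eq_neg_of_add_eq_zero_right h2
      have hfixp : ContinuousLinearMap.adjoint B (B p.1) = p.1 := by
        rw [hp2] at h1
        simp only [map_neg] at h1
        linear_combination (norm := abel) -h1
      have hp1 : p.1 = 0 := hfix _ hfixp
      have hp2' : p.2 = 0 := by rw [hp2, hp1, map_zero, neg_zero]
      exact Prod.ext hp1 hp2'
    let e := ContinuousLinearEquiv.ofBijective T hker hrange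
    set C := ‖(e.symm : (Hp × Hm) →L[ℂ] (Hp × Hm))‖ with hC
    have hCpos : (0:ℝ) ≤ C := norm_nonneg _
    have hbound : ∀ p : Hp × Hm, ‖p‖ ≤ C * ‖T p‖ := by
      intro p
      have h1 : e.symm (T p) = p :=
        ContinuousLinearEquiv.ofBijective_symm_apply_apply T hker hrange p
      calc ‖p‖ = ‖e.symm (T p)‖ := by rw [h1]
        _ ≤ C * ‖T p‖ := (e.symm : (Hp × Hm) →L[ℂ] (Hp × Hm)).le_opNorm _
    set D := C^2 / (1 + C^2) with hD
    have hden : (0:ℝ) < 1 + C^2 := by positivity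
    have hDmul : D * (1 + C^2) = C^2 := by rw [hD]; exact div_mul_cancel₀ _ hden.ne'
    have hD1 : D < 1 := by rw [hD, div_lt_one hden]; linarith
    have hD0 : (0:ℝ) ≤ D := by positivity
    set r := Real.sqrt ((D + 1)/2) with hrdef
    have hr2 : r^2 = (D + 1)/2 := Real.sq_sqrt (by linarith)
    have hr0 : (0:ℝ) ≤ r := Real.sqrt_nonneg _
    have hr1 : r < 1 := by nlinarith
    obtain ⟨x, hx1, hx2⟩ := B.exists_lt_apply_of_lt_opNorm (r := r) (by rw [hnorm]; exact hr1)
    have hBx : ‖B x‖ ≤ ‖x‖ := hcontr x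
    have hky : ‖x - ContinuousLinearMap.adjoint B (B x)‖^2 ≤ ‖x‖^2 - ‖B x‖^2 := hkey x
    have hTxy : T (x, -B x) = (x - ContinuousLinearMap.adjoint B (B x), 0) := by
      rw [hT]
      simp [sub_eq_add_neg]
    have h5 : ‖(x - ContinuousLinearMap.adjoint B (B x), (0:Hm))‖
        = ‖x - ContinuousLinearMap.adjoint B (B x)‖ := by
      simp [Prod.norm_def]
    have h6 : ‖(x, -B x)‖ ≤ C * ‖x - ContinuousLinearMap.adjoint B (B x)‖ := by
      have := hbound (x, -B x)
      rwa [hTxy, h5] at this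
    have h7 : r < C * ‖x - ContinuousLinearMap.adjoint B (B x)‖ :=
      lt_of_lt_of_le (lt_of_lt_of_le hx2 (hBx.trans (norm_fst_le (x, -B x)))) h6
    set n := ‖x - ContinuousLinearMap.adjoint B (B x)‖ with hn
    have hn0 : (0:ℝ) ≤ n := norm_nonneg _
    have h8 : n^2 < 1 - r^2 := by nlinarith
    have hsq : r^2 < C^2 * n^2 := by nlinarith
    have hfin : r^2 < C^2 * (1 - r^2) := by nlinarith [sq_nonneg C]
    nlinarith [hfin, hr2, hDmul]
  exact ⟨hpart1, hpart2, hpart3⟩
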